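/- Let t, s ∈ ℂ with Im(t) > 0, and let k ∈ ℕ. Then the k-th iterated complex derivative of the function x ↦ L(t,x,s) at any x with Re(x) > 0 equals (∏_{j=0}^{k−1} (−(s+j))) · L(t, x, s+k); the coefficient ∏_{j=0}^{k−1} (−(s+j)) = (−s)(−s−1)⋯(−s−k+1) equals Γ(1−s)/Γ(1−s−k) whenever the latter quotient is defined. -/

import Mathlib

open MeasureTheory

/-- The Lerch zeta function, defined by its (absolutely convergent, for `Im t > 0` and
`Re x > 0`) series, with all complex powers taken with the principal branch. -/
noncomputable def lerchZeta (t x s : ℂ) : ℂ :=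
  ∑' m : ℕ, ((m : ℂ) + x) ^ (-s) * Complex.exp (2 * Real.pi * Complex.I * t * m)

/-- Basic norm bound for one power factor. -/
lemma lerch_term_bound (w : ℂ) {a R : ℝ} (ha : 0 < a) (m : ℕ) {y : ℂ}
    (hy1 : a ≤ y.re) (hy2 : ‖y‖ ≤ R) :
    ‖((m : ℂ) + y) ^ (-w)‖
      ≤ (a ^ (-w.re) + (1 + R + m) ^ |w.re|) * Real.exp (Real.pi * |w.im|) := by
  have hmy_re : a ≤ ((m : ℂ) + y).re := by
    simp only [Complex.add_re, Complex.natCast_re]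
    linarith [Nat.cast_nonneg (α := ℝ) m]
  have habs_lb : a ≤ ‖(m : ℂ) + y‖ :=
    hmy_re.trans (Complex.re_le_norm _)
  have habs_pos : (0:ℝ) < ‖(m : ℂ) + y‖ := lt_of_lt_of_le ha habs_lb
  have habs_ub : ‖(m : ℂ) + y‖ ≤ 1 + R + m := by
    calc ‖(m : ℂ) + y‖ ≤ ‖(m : ℂ)‖ + ‖y‖ :=
          norm_add_le _ _
      _ ≤ m + R := by
          simp only [Complex.norm_natCast]
          linarith
      _ ≤ 1 + R + m := by linarith
  have hR0 : (0:ℝ) ≤ R := le_trans (norm_nonneg y) hy2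
  have h1 : ‖((m : ℂ) + y) ^ (-w)‖
      ≤ ‖(m : ℂ) + y‖ ^ (-w.re) / Real.exp (Complex.arg ((m : ℂ) + y) * (-w).im) := by
    simpa using Complex.norm_cpow_le ((m : ℂ) + y) (-w)
  have harg : |Complex.arg ((m : ℂ) + y)| ≤ Real.pi := Complex.abs_arg_le_pi _
  have hexp_lb : Real.exp (-(Real.pi * |w.im|)) ≤
      Real.exp (Complex.arg ((m : ℂ) + y) * (-w).im) := by
    apply Real.exp_le_exp.2
    have h5 : |Complex.arg ((m : ℂ) + y) * (-w).im| ≤ Real.pi * |w.im| := by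
      rw [abs_mul]
      have h6 : |(-w).im| = |w.im| := by simp
      rw [h6]
      exact mul_le_mul_of_nonneg_right harg (abs_nonneg _)
    linarith [neg_abs_le (Complex.arg ((m : ℂ) + y) * (-w).im)]
  have h2 : ‖(m : ℂ) + y‖ ^ (-w.re) / Real.exp (Complex.arg ((m : ℂ) + y) * (-w).im)
      ≤ ‖(m : ℂ) + y‖ ^ (-w.re) * Real.exp (Real.pi * |w.im|) := by
    rw [div_le_iff₀ (Real.exp_pos _)]
    have hbase : (0:ℝ) ≤ ‖(m : ℂ) + y‖ ^ (-w.re) := Real.rpow_nonneg habs_pos.le _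
    calc ‖(m : ℂ) + y‖ ^ (-w.re)
        = ‖(m : ℂ) + y‖ ^ (-w.re) *
            (Real.exp (Real.pi * |w.im|) * Real.exp (-(Real.pi * |w.im|))) := by
          rw [← Real.exp_add]; simp
      _ ≤ ‖(m : ℂ) + y‖ ^ (-w.re) *
            (Real.exp (Real.pi * |w.im|) * Real.exp (Complex.arg ((m : ℂ) + y) * (-w).im)) := by
          apply mul_le_mul_of_nonneg_left _ hbase
          exact mul_le_mul_of_nonneg_left hexp_lb (Real.exp_pos _).le
      _ = ‖(m : ℂ) + y‖ ^ (-w.re) *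
            Real.exp (Real.pi * |w.im|) * Real.exp (Complex.arg ((m : ℂ) + y) * (-w).im) := by ring
  have h3 : ‖(m : ℂ) + y‖ ^ (-w.re)
      ≤ a ^ (-w.re) + (1 + R + m) ^ |w.re| := by
    rcases le_or_gt 0 w.re with hw | hw
    · have h7 : ‖(m : ℂ) + y‖ ^ (-w.re) ≤ a ^ (-w.re) :=
        Real.rpow_le_rpow_of_nonpos ha habs_lb (neg_nonpos.2 hw)
      have hpos : (0:ℝ) ≤ (1 + R + m) ^ |w.re| := Real.rpow_nonneg (by positivity) _
      linarith
    · have habs : |w.re| = -w.re := abs_of_neg hw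
      have h7 : ‖(m : ℂ) + y‖ ^ (-w.re) ≤ (1 + R + m) ^ (-w.re) :=
        Real.rpow_le_rpow habs_pos.le habs_ub (by linarith)
      have hpos : (0:ℝ) ≤ a ^ (-w.re) := Real.rpow_nonneg ha.le _
      rw [habs]
      linarith
  calc ‖((m : ℂ) + y) ^ (-w)‖ ≤ _ := h1
    _ ≤ ‖(m : ℂ) + y‖ ^ (-w.re) * Real.exp (Real.pi * |w.im|) := h2
    _ ≤ (a ^ (-w.re) + (1 + R + m) ^ |w.re|) * Real.exp (Real.pi * |w.im|) :=
        mul_le_mul_of_nonneg_right h3 (Real.exp_pos _).le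

set_option maxHeartbeats 1000000 in
lemma lerch_summable_aux (p : ℝ) {r : ℝ} (hr0 : 0 < r) (hr : r < 1) (C R : ℝ) (hR : 0 ≤ R) :
    Summable (fun m : ℕ => (C + (1 + R + m) ^ p) * r ^ m) := by
  have hnorm : ‖r‖ < 1 := by rwa [Real.norm_eq_abs, abs_of_pos hr0]
  have hgeo : Summable (fun m : ℕ => r ^ m) := summable_geometric_of_lt_one hr0.le hr
  have key : Summable (fun m : ℕ => (1 + R + m) ^ p * r ^ m) := by
    obtain ⟨n, hn⟩ : ∃ n : ℕ, p ≤ n := exists_nat_ge p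
    have hbase : ∀ m : ℕ, (1:ℝ) ≤ 1 + R + m := fun m => by
      have := Nat.cast_nonneg (α := ℝ) m; linarith
    have hb2 : ∀ m : ℕ, (1 + R + m) ^ p ≤ ((1 + R) * (1 + m)) ^ n := by
      intro m
      calc (1 + R + m) ^ p ≤ (1 + R + m) ^ (n : ℝ) :=
            Real.rpow_le_rpow_of_exponent_le (hbase m) hn
        _ = (1 + R + m) ^ n := by rw [Real.rpow_natCast]
        _ ≤ ((1 + R) * (1 + m)) ^ n := by
            apply pow_le_pow_left₀ (by linarith [hbase m])
            have := Nat.cast_nonneg (α := ℝ) m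
            nlinarith
    have hsum : Summable (fun m : ℕ => ((1 + R) * (1 + m)) ^ n * r ^ m) := by
      have h1 : Summable (fun m : ℕ => ((1 + m : ℝ)) ^ n * r ^ m) := by
        have h2 : Summable (fun m : ℕ => ((m : ℝ)) ^ n * r ^ m) :=
          summable_pow_mul_geometric_of_norm_lt_one n hnorm
        have h3 : Summable (fun m : ℕ => (((m + 1 : ℕ) : ℝ)) ^ n * r ^ (m + 1)) :=
          (summable_nat_add_iff 1).2 h2
        have h5 := h3.mul_left r⁻¹
        refine h5.congr fun m => ?_
        push_cast
        rw [pow_succ]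
        field_simp
        ring
      refine Summable.congr (h1.mul_left ((1 + R) ^ n)) fun m => ?_
      rw [mul_pow]
      ring
    refine Summable.of_nonneg_of_le (fun m => ?_) (fun m => ?_) hsum
    · exact mul_nonneg (Real.rpow_nonneg (by linarith [hbase m]) _) (pow_nonneg hr0.le _)
    · exact mul_le_mul_of_nonneg_right (hb2 m) (pow_nonneg hr0.le _)
  have := (hgeo.mul_left C).add key
  apply this.congr
  intro m
  ring

lemma lerch_exp_abs (t : ℂ) (m : ℕ) :
    ‖Complex.exp (2 * Real.pi * Complex.I * t * m)‖
      = Real.exp (-(2 * Real.pi * t.im)) ^ m := by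
  rw [Complex.norm_exp, ← Real.exp_nat_mul]
  congr 1
  simp [Complex.mul_re, Complex.mul_im]
  ring

lemma lerch_r_lt_one (t : ℂ) (ht : 0 < t.im) : Real.exp (-(2 * Real.pi * t.im)) < 1 := by
  apply Real.exp_lt_one_iff.2
  have := Real.pi_pos
  nlinarith

lemma lerch_summable (t w : ℂ) (ht : 0 < t.im) {x : ℂ} (hx : 0 < x.re) :
    Summable (fun m : ℕ => ((m : ℂ) + x) ^ (-w)
      * Complex.exp (2 * Real.pi * Complex.I * t * m)) := by
  set r : ℝ := Real.exp (-(2 * Real.pi * t.im)) with hrdef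
  have hr0 : 0 < r := Real.exp_pos _
  have hr1 : r < 1 := lerch_r_lt_one t ht
  apply Summable.of_norm
  have hsum := (lerch_summable_aux |w.re| hr0 hr1 (x.re ^ (-w.re)) (‖x‖)
      (norm_nonneg x)).mul_left (Real.exp (Real.pi * |w.im|))
  have hsum' : Summable (fun m : ℕ =>
      ((x.re ^ (-w.re) + (1 + ‖x‖ + m) ^ |w.re|)
        * Real.exp (Real.pi * |w.im|)) * r ^ m) := by
    apply hsum.congr
    intro m
    ring
  refine Summable.of_nonneg_of_le (fun m => norm_nonneg _) (fun m => ?_) hsum'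
  rw [norm_mul]
  have h1 := lerch_term_bound w hx m (le_refl x.re) (le_refl (‖x‖))
  have h2 : ‖Complex.exp (2 * Real.pi * Complex.I * t * m)‖ = r ^ m := lerch_exp_abs t m
  rw [h2]
  exact mul_le_mul_of_nonneg_right h1 (pow_nonneg hr0.le _)

lemma lerch_hasDerivAt (t s : ℂ) (ht : 0 < t.im) {x : ℂ} (hx : 0 < x.re) :
    HasDerivAt (fun y : ℂ => lerchZeta t y s) (-s * lerchZeta t x (s + 1)) x := by
  set r : ℝ := Real.exp (-(2 * Real.pi * t.im)) with hrdef
  have hr0 : 0 < r := Real.exp_pos _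
  have hr1 : r < 1 := lerch_r_lt_one t ht
  set a : ℝ := x.re / 2 with hadef
  have ha : 0 < a := by positivity
  set R : ℝ := ‖x‖ + 1 with hRdef
  have hR0 : 0 ≤ R := by positivity
  set U : Set ℂ := {y : ℂ | a < y.re} ∩ Metric.ball 0 R with hU
  have hUopen : IsOpen U :=
    (isOpen_lt continuous_const Complex.continuous_re).inter Metric.isOpen_ball
  have hUconn : IsPreconnected U :=
    ((convex_halfSpace_re_gt a).inter (convex_ball 0 R)).isPreconnected
  have hxU : x ∈ U := by
    constructor
    · show a < x.re
      rw [hadef]; linarith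
    · show x ∈ Metric.ball 0 R
      simp only [Metric.mem_ball, dist_zero_right]
      rw [hRdef]; linarith
  set g : ℕ → ℂ → ℂ := fun m y => ((m : ℂ) + y) ^ (-s)
    * Complex.exp (2 * Real.pi * Complex.I * t * m) with hg
  set g' : ℕ → ℂ → ℂ := fun m y => (-s * ((m : ℂ) + y) ^ (-(s + 1)))
    * Complex.exp (2 * Real.pi * Complex.I * t * m) with hg'
  set u : ℕ → ℝ := fun m => (‖s‖ *
    ((a ^ (-(s + 1).re) + (1 + R + m) ^ |(s + 1).re|) * Real.exp (Real.pi * |(s + 1).im|)))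
    * r ^ m with hu
  have hUa : ∀ y ∈ U, a ≤ y.re ∧ ‖y‖ ≤ R := by
    intro y hy
    refine ⟨hy.1.le, ?_⟩
    have := hy.2
    simp only [Metric.mem_ball, dist_zero_right] at this
    exact this.le
  have hderiv : ∀ m : ℕ, ∀ y ∈ U, HasDerivAt (g m) (g' m y) y := by
    intro m y hy
    have hyre : (0:ℝ) < ((m : ℂ) + y).re := by
      simp only [Complex.add_re, Complex.natCast_re]
      have := (hUa y hy).1
      have := Nat.cast_nonneg (α := ℝ) m
      linarith
    have hmem : ((m : ℂ) + y) ∈ Complex.slitPlane := Complex.mem_slitPlane_iff.2 (Or.inl hyre)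
    have h1 : HasDerivAt (fun z : ℂ => (m : ℂ) + z) 1 y := by
      simpa using (hasDerivAt_id y).const_add (m : ℂ)
    have h2 : HasDerivAt (fun z : ℂ => ((m : ℂ) + z) ^ (-s))
        (-s * ((m : ℂ) + y) ^ (-s - 1) * 1) y := h1.cpow_const (c := -s) hmem
    have h3 := h2.mul_const (Complex.exp (2 * Real.pi * Complex.I * t * m))
    refine h3.congr_deriv ?_
    rw [hg']
    have h4 : -(s + 1) = -s - 1 := by ring
    rw [h4]
    ring
  have hbound : ∀ m : ℕ, ∀ y ∈ U, ‖g' m y‖ ≤ u m := by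
    intro m y hy
    obtain ⟨hy1, hy2⟩ := hUa y hy
    rw [hg', hu]
    simp only [norm_mul, norm_neg]
    rw [lerch_exp_abs t m, ← hrdef]
    have h1 := lerch_term_bound (s + 1) ha m hy1 hy2
    apply mul_le_mul_of_nonneg_right _ (pow_nonneg hr0.le _)
    exact mul_le_mul_of_nonneg_left h1 (norm_nonneg s)
  have husum : Summable u := by
    have := (lerch_summable_aux |(s + 1).re| hr0 hr1 (a ^ (-(s + 1).re)) R hR0).mul_left
      (‖s‖ * Real.exp (Real.pi * |(s + 1).im|))
    apply this.congr
    intro m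
    rw [hu]
    ring
  have hg0 : Summable fun m => g m x := lerch_summable t s ht hx
  have := hasDerivAt_tsum_of_isPreconnected husum hUopen hUconn hderiv hbound hxU hg0 hxU
  have heq : (fun z : ℂ => ∑' m : ℕ, g m z) = fun y : ℂ => lerchZeta t y s := rfl
  rw [heq] at this
  refine this.congr_deriv ?_
  rw [lerchZeta, ← tsum_mul_left]
  congr 1
  funext m
  rw [hg']
  ring

lemma lerch_gamma_prod (s : ℂ) (k : ℕ) (h : Complex.Gamma (1 - s - k) ≠ 0) :
    (∏ j ∈ Finset.range k, -(s + j)) = Complex.Gamma (1 - s) / Complex.Gamma (1 - s - k) := by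
  induction k with
  | zero =>
    simp only [Nat.cast_zero, sub_zero] at h ⊢
    rw [Finset.prod_range_zero, div_self h]
  | succ k ih =>
    have hne : (-(s + (k : ℂ))) ≠ 0 := by
      intro h0
      apply h
      have hs : s = -(k : ℂ) := by linear_combination -h0
      have he : (1 : ℂ) - s - ((k + 1 : ℕ) : ℂ) = 0 := by rw [hs]; push_cast; ring
      rw [he, Complex.Gamma_zero]
    have hz : (1 : ℂ) - s - ((k + 1 : ℕ) : ℂ) ≠ 0 :=
      fun h0 => h (by rw [h0, Complex.Gamma_zero])
    have hrec : Complex.Gamma (1 - s - k)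
        = (-(s + k)) * Complex.Gamma (1 - s - ((k + 1 : ℕ) : ℂ)) := by
      have he : (1 : ℂ) - s - k = (1 - s - ((k + 1 : ℕ) : ℂ)) + 1 := by push_cast; ring
      rw [he, Complex.Gamma_add_one _ hz]
      congr 1
      push_cast; ring
    have hk : Complex.Gamma (1 - s - k) ≠ 0 := hrec ▸ mul_ne_zero hne h
    rw [Finset.prod_range_succ, ih hk, hrec]
    field_simp
    rw [mul_comm (Complex.Gamma (1 - s))]
    rw [mul_div_cancel_left₀ _ (neg_ne_zero.mp hne)]

theorem iteratedDeriv_lerch_x (t s : ℂ) (ht : 0 < t.im) (k : ℕ) :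
    (∀ x : ℂ, 0 < x.re →
      iteratedDeriv k (fun y : ℂ => lerchZeta t y s) x
        = (∏ j ∈ Finset.range k, -(s + j)) * lerchZeta t x (s + k)) ∧
    (Complex.Gamma (1 - s - k) ≠ 0 →
      (∏ j ∈ Finset.range k, -(s + j))
        = Complex.Gamma (1 - s) / Complex.Gamma (1 - s - k)) := by
  constructor
  · induction k with
    | zero =>
      intro x hx
      simp [iteratedDeriv_zero]
    | succ k ih =>
      intro x hx
      rw [iteratedDeriv_succ]
      have hev : iteratedDeriv k (fun y : ℂ => lerchZeta t y s)
          =ᶠ[nhds x] fun y : ℂ => (∏ j ∈ Finset.range k, -(s + j)) * lerchZeta t y (s + k) := by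
        have hopen : IsOpen {y : ℂ | 0 < y.re} := isOpen_lt continuous_const Complex.continuous_re
        filter_upwards [hopen.mem_nhds hx] with y hy
        exact ih y hy
      rw [hev.deriv_eq]
      have hd := ((lerch_hasDerivAt t (s + k) ht hx).const_mul
        (∏ j ∈ Finset.range k, -(s + j))).deriv
      rw [hd, Finset.prod_range_succ]
      have : lerchZeta t x (s + k + 1) = lerchZeta t x (s + (k + 1 : ℕ)) := by
        congr 1
        push_cast; ring
      rw [← this]
      ring
  · exact lerch_gamma_prod s k
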